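/- Let r ≥ 2 and n ≥ 1 be integers, set m = (r-1)n - 1, and let w = e^{2πi/r}. Suppose x_1, ..., x_m are complex numbers such that the R-Bonacci polynomial factors as R_{rn}(X) = X · ∏_{k=1}^{m} ∏_{l=0}^{r-1} (X - x_k w^l). Then for every j with 0 ≤ j ≤ m, the j-th elementary symmetric polynomial of the r-th powers of the x_k satisfies σ_j(x_1^r, ..., x_m^r) = (-1)^j · C_r(rn - j - 1, j). -/

import Mathlib

noncomputable def RBon (r : ℕ) : ℕ → Polynomial ℂ
  | 0 => 0
  | 1 => 1
  | n + 2 => ∑ i ∈ (Finset.range r).attach,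
      Polynomial.X ^ (i : ℕ) * RBon r (n + 2 - (r - (i : ℕ)))
  decreasing_by
    have h := i.2
    rw [Finset.mem_range] at h
    omega

noncomputable def rnomial (r n j : ℕ) : ℕ :=
  ((∑ i ∈ Finset.range r, (Polynomial.X : Polynomial ℕ) ^ i) ^ n).coeff j

lemma rnomial_zero (r : ℕ) {j : ℕ} (hj : 0 < j) : rnomial r 0 j = 0 := by
  simp [rnomial, Polynomial.coeff_one, hj.ne']

lemma rnomial_zero_zero (r : ℕ) : rnomial r 0 0 = 1 := by
  simp [rnomial]

lemma rnomial_eq_zero (r a j : ℕ) (h : (r - 1) * a < j) : rnomial r a j = 0 := by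
  apply Polynomial.coeff_eq_zero_of_natDegree_lt
  have h1 : ((∑ i ∈ Finset.range r, (Polynomial.X : Polynomial ℕ) ^ i)).natDegree ≤ r - 1 := by
    apply Polynomial.natDegree_sum_le_of_forall_le
    intro i hi
    rw [Polynomial.natDegree_X_pow]
    have := Finset.mem_range.mp hi
    omega
  calc ((∑ i ∈ Finset.range r, (Polynomial.X : Polynomial ℕ) ^ i) ^ a).natDegree
      ≤ a * ((∑ i ∈ Finset.range r, (Polynomial.X : Polynomial ℕ) ^ i)).natDegree :=
        Polynomial.natDegree_pow_le
    _ ≤ a * (r - 1) := Nat.mul_le_mul_left a h1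
    _ = (r - 1) * a := Nat.mul_comm _ _
    _ < j := h

lemma rnomial_succ (r a j : ℕ) :
    rnomial r (a + 1) j = ∑ d ∈ Finset.range r, if d ≤ j then rnomial r a (j - d) else 0 := by
  unfold rnomial
  rw [pow_succ, Finset.mul_sum, Polynomial.finset_sum_coeff]
  refine Finset.sum_congr rfl fun d _ => ?_
  rw [Polynomial.coeff_mul_X_pow']

noncomputable def Qp (r N : ℕ) : Polynomial ℂ :=
  ∑ j ∈ Finset.range N, Polynomial.C ((rnomial r (N - 1 - j) j : ℕ) : ℂ) * Polynomial.X ^ (r * j)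

lemma Qp_zero (r : ℕ) : Qp r 0 = 0 := by simp [Qp]

lemma Qp_coeff (r N j : ℕ) (hr : 0 < r) (hj : j < N) :
    (Qp r N).coeff (r * j) = ((rnomial r (N - 1 - j) j : ℕ) : ℂ) := by
  unfold Qp
  rw [Polynomial.finset_sum_coeff, Finset.sum_eq_single j]
  · simp [Polynomial.coeff_C_mul, Polynomial.coeff_X_pow]
  · intro b _ hbj
    rw [Polynomial.coeff_C_mul, Polynomial.coeff_X_pow, if_neg, mul_zero]
    intro h
    exact hbj (Nat.eq_of_mul_eq_mul_left hr h.symm)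
  · intro h
    exact absurd (Finset.mem_range.mpr hj) h

lemma Qp_natDegree (r N : ℕ) (hr : 1 ≤ r) : (Qp r N).natDegree ≤ (r - 1) * (N - 1) := by
  apply Polynomial.natDegree_sum_le_of_forall_le
  intro j hj
  by_cases h : (r - 1) * (N - 1 - j) < j
  · rw [rnomial_eq_zero r _ _ h]
    simp
  · refine (Polynomial.natDegree_C_mul_X_pow_le _ _).trans ?_
    push_neg at h
    have hj' : j ≤ N - 1 := by have := Finset.mem_range.mp hj; omega
    obtain ⟨s, rfl⟩ : ∃ s, r = s + 1 := ⟨r - 1, by omega⟩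
    simp only [Nat.add_sub_cancel] at h ⊢
    have hsplit : N - 1 = (N - 1 - j) + j := by omega
    calc (s + 1) * j = j + s * j := by ring
      _ ≤ s * (N - 1 - j) + s * j := Nat.add_le_add_right h _
      _ = s * ((N - 1 - j) + j) := by ring
      _ = s * (N - 1) := by rw [← hsplit]

lemma Qp_rec (r n : ℕ) :
    Qp r (n + 2) = ∑ d ∈ Finset.range r, Polynomial.X ^ (r * d) * Qp r (n + 1 - d) := by
  have step1 : ∀ d : ℕ,
      Polynomial.X ^ (r * d) * Qp r (n + 1 - d)
        = ∑ j' ∈ Finset.Ico d (n + 1),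
            Polynomial.C ((rnomial r (n - j') (j' - d) : ℕ) : ℂ) * Polynomial.X ^ (r * j') := by
    intro d
    rw [Finset.sum_Ico_eq_sum_range]
    unfold Qp
    rw [Finset.mul_sum]
    refine Finset.sum_congr rfl fun j hj => ?_
    have e1 : n + 1 - d - 1 - j = n - (d + j) := by omega
    have e2 : d + j - d = j := by omega
    rw [e1, e2, ← mul_assoc, mul_comm (Polynomial.X ^ (r * d)) (Polynomial.C _), mul_assoc,
      ← pow_add, ← Nat.mul_add]
  simp only [step1]
  have step2 : ∀ d : ℕ, Finset.Ico d (n + 1) =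
      (Finset.range (n + 1)).filter (fun j' => d ≤ j') := by
    intro d; ext a; simp [Finset.mem_Ico, Finset.mem_range, Finset.mem_filter]; omega
  simp only [step2, Finset.sum_filter]
  rw [Finset.sum_comm]
  have step3 : ∀ j' ∈ Finset.range (n + 1),
      (∑ d ∈ Finset.range r, if d ≤ j' then
          Polynomial.C ((rnomial r (n - j') (j' - d) : ℕ) : ℂ) * Polynomial.X ^ (r * j') else 0)
        = Polynomial.C ((rnomial r (n + 2 - 1 - j') j' : ℕ) : ℂ) * Polynomial.X ^ (r * j') := by
    intro j' hj'
    have hj'' : j' ≤ n := by have := Finset.mem_range.mp hj'; omega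
    have e3 : n + 2 - 1 - j' = (n - j') + 1 := by omega
    rw [e3, rnomial_succ, Nat.cast_sum, map_sum, Finset.sum_mul]
    refine Finset.sum_congr rfl fun d _ => ?_
    split_ifs <;> simp
  rw [Finset.sum_congr rfl step3]
  unfold Qp
  rw [Finset.sum_range_succ (n := n + 1)]
  rw [show n + 2 - 1 - (n + 1) = 0 from by omega, rnomial_zero r (by omega : 0 < n + 1)]
  simp

lemma reflect_sum {ι : Type*} (s : Finset ι) (f : ι → Polynomial ℂ) (N : ℕ) :
    Polynomial.reflect N (∑ i ∈ s, f i) = ∑ i ∈ s, Polynomial.reflect N (f i) := by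
  classical
  induction s using Finset.induction with
  | empty => simp
  | insert a s h ih => simp [Finset.sum_insert h, Polynomial.reflect_add, ih]

lemma RBon_eq_reflect (r : ℕ) (hr : 2 ≤ r) :
    ∀ N, RBon r N = Polynomial.reflect ((r - 1) * (N - 1)) (Qp r N) := by
  intro N
  induction N using Nat.strong_induction_on with
  | _ N ih =>
    match N with
    | 0 => simp [RBon, Qp]
    | 1 =>
      rw [RBon]
      have : Qp r 1 = Polynomial.C 1 := by
        simp [Qp, rnomial_zero_zero]
      rw [this, Polynomial.reflect_C]
      simp
    | (n + 2) =>
      rw [RBon, Qp_rec, reflect_sum, Finset.sum_attach (Finset.range r)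
        (fun i => Polynomial.X ^ (i : ℕ) * RBon r (n + 2 - (r - (i : ℕ))))]
      rw [← Finset.sum_range_reflect (fun i => Polynomial.X ^ (i : ℕ) * RBon r (n + 2 - (r - i))) r]
      refine Finset.sum_congr rfl fun d hd => ?_
      have hdr : d < r := Finset.mem_range.mp hd
      have e1 : r - (r - 1 - d) = d + 1 := by omega
      have e2 : n + 2 - (d + 1) = n + 1 - d := by omega
      rw [e1, e2]
      by_cases hdn : d ≤ n
      · have hFG : (r - 1) * (n + 2 - 1) = (r - 1) * (d + 1) + (r - 1) * (n - d) := by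
          rw [← Nat.mul_add]; congr 1; omega
        have hF : (Polynomial.X ^ (r * d) : Polynomial ℂ).natDegree ≤ (r - 1) * (d + 1) := by
          rw [Polynomial.natDegree_X_pow]
          obtain ⟨s, rfl⟩ : ∃ s, r = s + 1 := ⟨r - 1, by omega⟩
          simp only [Nat.add_sub_cancel]
          calc (s + 1) * d = s * d + d := by ring
            _ ≤ s * d + s := by omega
            _ = s * (d + 1) := by ring
        have hG : (Qp r (n + 1 - d)).natDegree ≤ (r - 1) * (n - d) := by
          have := Qp_natDegree r (n + 1 - d) (by omega)
          rwa [show n + 1 - d - 1 = n - d from by omega] at this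
        rw [hFG, Polynomial.reflect_mul _ _ hF hG, Polynomial.reflect_monomial,
          Polynomial.revAt_le (le_trans (by rw [Polynomial.natDegree_X_pow] at hF; exact hF) le_rfl)]
        have e3 : (r - 1) * (d + 1) - r * d = r - 1 - d := by
          obtain ⟨s, rfl⟩ : ∃ s, r = s + 1 := ⟨r - 1, by omega⟩
          simp only [Nat.add_sub_cancel]
          have : (s + 1) * d ≤ s * (d + 1) := by nlinarith [hdr]
          have hds : d ≤ s := by omega
          have h1 : s * (d + 1) = (s + 1) * d + (s - d) := by zify [hds]; ring
          omega
        rw [e3, ih (n + 1 - d) (by omega),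
          show (r - 1) * (n + 1 - d - 1) = (r - 1) * (n - d) from by congr 1; omega]
      · have e4 : n + 1 - d = 0 := by omega
        rw [e4]
        have hQ0 : Qp r 0 = 0 := by simp [Qp]
        have hR0 : RBon r 0 = 0 := by rw [RBon]
        rw [hQ0, hR0, mul_zero, mul_zero, Polynomial.reflect_zero]

lemma coeff_comp_X_pow (P : Polynomial ℂ) (r t : ℕ) (hr : 0 < r) :
    (P.comp (Polynomial.X ^ r)).coeff (r * t) = P.coeff t := by
  rw [Polynomial.comp, Polynomial.eval₂_eq_sum, Polynomial.sum]
  simp_rw [← pow_mul]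
  rw [Polynomial.finset_sum_coeff]
  simp_rw [Polynomial.coeff_C_mul, Polynomial.coeff_X_pow]
  by_cases ht : t ∈ P.support
  · rw [Finset.sum_eq_single t]
    · simp
    · intro b _ hbt
      rw [if_neg, mul_zero]
      intro h
      exact hbt (Nat.eq_of_mul_eq_mul_left hr h.symm)
    · intro h; exact absurd ht h
  · rw [Polynomial.notMem_support_iff.mp ht, Finset.sum_eq_zero]
    intro b hb
    rw [if_neg, mul_zero]
    intro h
    exact ht (Nat.eq_of_mul_eq_mul_left hr h.symm ▸ hb)

lemma prod_lin (r : ℕ) (hr : 2 ≤ r) (w : ℂ) (hw : w = Complex.exp (2 * Real.pi * Complex.I / r))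
    (c : ℂ) :
    ∏ l ∈ Finset.range r, (Polynomial.X - Polynomial.C (c * w ^ l))
      = Polynomial.X ^ r - Polynomial.C (c ^ r) := by
  have hr0 : (r : ℕ) ≠ 0 := by omega
  have hprim : IsPrimitiveRoot w r := by
    rw [hw]; exact Complex.isPrimitiveRoot_exp r hr0
  have hmonic : (Polynomial.X ^ r - Polynomial.C (c ^ r)).Monic :=
    Polynomial.monic_X_pow_sub_C _ hr0
  have hsplits : Polynomial.Splits (Polynomial.X ^ r - Polynomial.C (c ^ r)) :=
    IsAlgClosed.splits _
  rw [hsplits.eq_prod_roots_of_monic hmonic]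
  have hroots : (Polynomial.X ^ r - Polynomial.C (c ^ r)).roots = Polynomial.nthRoots r (c ^ r) :=
    rfl
  rw [hroots, hprim.nthRoots_eq (rfl : c ^ r = c ^ r), Multiset.map_map]
  rw [Finset.prod]
  congr 1
  rw [Finset.range_val]
  congr 1
  funext l
  simp [mul_comm]

lemma RBon_coeff (r N j : ℕ) (hr : 2 ≤ r) (hj : j < N) (hjr : r * j ≤ (r - 1) * (N - 1)) :
    (RBon r N).coeff ((r - 1) * (N - 1) - r * j) = ((rnomial r (N - 1 - j) j : ℕ) : ℂ) := by
  rw [RBon_eq_reflect r hr N, Polynomial.coeff_reflect,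
    Polynomial.revAt_le (Nat.sub_le _ _), Nat.sub_sub_self hjr, Qp_coeff r N j (by omega) hj]

theorem stmt_0 (r n : ℕ) (hr : 2 ≤ r) (hn : 1 ≤ n)
    (m : ℕ) (hm : m = (r - 1) * n - 1)
    (w : ℂ) (hw : w = Complex.exp (2 * Real.pi * Complex.I / r))
    (x : Fin m → ℂ)
    (hfac : RBon r (r * n) =
      Polynomial.X * ∏ k : Fin m, ∏ l ∈ Finset.range r,
        (Polynomial.X - Polynomial.C (x k * w ^ l))) :
    ∀ j : ℕ, j ≤ m →
      ∑ s ∈ Finset.powersetCard j (Finset.univ : Finset (Fin m)), ∏ k ∈ s, x k ^ r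
        = (-1) ^ j * (rnomial r (r * n - j - 1) j : ℂ) := by
  intro j hj
  have hr1 : 1 ≤ r := by omega
  have hrn1 : 1 ≤ (r - 1) * n := by
    have : 1 * 1 ≤ (r - 1) * n := Nat.mul_le_mul (by omega) hn
    omega
  have h2 : 1 ≤ r * n := by
    have : 1 * 1 ≤ r * n := Nat.mul_le_mul (by omega) hn
    omega
  have hE : (r - 1) * (r * n - 1) = r * m + 1 := by
    rw [hm]
    zify [hr1, h2, hrn1]
    ring
  have hjm : r * j ≤ r * m := Nat.mul_le_mul_left r hj
  have hjN : j < r * n := by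
    have h3 : (r - 1) * n ≤ r * n := Nat.mul_le_mul_right n (by omega)
    have h5 : m < r * n := by
      calc m = (r - 1) * n - 1 := hm
        _ < (r - 1) * n := Nat.sub_lt (by omega) one_pos
        _ ≤ r * n := h3
    exact lt_of_le_of_lt hj h5
  have hjr : r * j ≤ (r - 1) * (r * n - 1) := by
    rw [hE]; exact hjm.trans (Nat.le_succ _)
  have hexp : (r - 1) * (r * n - 1) - r * j = r * (m - j) + 1 := by
    rw [hE, Nat.mul_sub]
    have := hjm
    omega
  have hL := RBon_coeff r (r * n) j hr hjN hjr
  have hfac2 : RBon r (r * n) = Polynomial.X *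
      ((∏ k : Fin m, (Polynomial.X - Polynomial.C (x k ^ r))).comp (Polynomial.X ^ r)) := by
    rw [hfac]
    congr 1
    rw [Polynomial.prod_comp]
    refine Finset.prod_congr rfl fun k _ => ?_
    rw [Polynomial.sub_comp, Polynomial.X_comp, Polynomial.C_comp]
    exact prod_lin r hr w hw (x k)
  have hRc : (RBon r (r * n)).coeff ((r - 1) * (r * n - 1) - r * j)
      = (∏ k : Fin m, (Polynomial.X - Polynomial.C (x k ^ r))).coeff (m - j) := by
    rw [hfac2, hexp, Polynomial.coeff_X_mul, coeff_comp_X_pow _ r (m - j) (by omega)]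
  have hcard : Multiset.card (Multiset.map (fun k : Fin m => x k ^ r) Finset.univ.val) = m := by
    rw [Multiset.card_map]; simp
  have hV := Multiset.prod_X_sub_C_coeff
    (Multiset.map (fun k : Fin m => x k ^ r) Finset.univ.val)
    (k := m - j) (by rw [hcard]; omega)
  rw [hcard, Multiset.map_map, Nat.sub_sub_self hj] at hV
  have hprodeq : (∏ k : Fin m, (Polynomial.X - Polynomial.C (x k ^ r)))
      = (Multiset.map ((fun t => Polynomial.X - Polynomial.C t) ∘ fun k : Fin m => x k ^ r)
          Finset.univ.val).prod := by
    rw [Finset.prod_eq_multiset_prod]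
    rfl
  have hesymm : (Multiset.map (fun k : Fin m => x k ^ r) Finset.univ.val).esymm j
      = ∑ s ∈ Finset.powersetCard j Finset.univ, ∏ k ∈ s, x k ^ r := by
    rw [Finset.esymm_map_val]
  have hkey : ((rnomial r (r * n - 1 - j) j : ℕ) : ℂ)
      = (-1) ^ j * ∑ s ∈ Finset.powersetCard j Finset.univ, ∏ k ∈ s, x k ^ r := by
    rw [← hL, hRc, hprodeq, hV, hesymm]
  rw [show r * n - j - 1 = r * n - 1 - j from by rw [Nat.sub_sub, Nat.sub_sub, Nat.add_comm],
    hkey, ← mul_assoc, ← mul_pow]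
  norm_num
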